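/- Let f be a rank function on the subsets of 𝒩 = {1,…,N} and let x* ∈ P_f. Define g(S) = min_{T : S ⊆ T ⊆ 𝒩} ( f(T) − ∑_{n∈T} x*_n ) for every S ⊆ 𝒩. Then g is normalized, monotone and submodular (i.e. a rank function), and the polyhedron {x ∈ ℝ^N : x_n ≥ 0 for all n, and ∑_{n∈S} x_n ≤ f(S) − ∑_{n∈S} x*_n for every S ⊆ 𝒩} equals the polymatroid P_g. -/

import Mathlib

open Finset

/-- Contracting a polymatroid at a point `x* ∈ P_f` yields a polymatroid:
`g(S) = min_{T ⊇ S} (f(T) - ∑_{n∈T} x*_n)` is a rank function, and the polyhedron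
`{x ≥ 0 : ∑_{n∈S} x_n ≤ f(S) - ∑_{n∈S} x*_n}` equals `P_g`. -/
theorem quantizedVCG_statement_0 (N : ℕ) (hN : 1 ≤ N)
    (f : Finset (Fin N) → ℝ)
    (hf_norm : f ∅ = 0)
    (hf_mono : ∀ S T : Finset (Fin N), S ⊆ T → f S ≤ f T)
    (hf_sub : ∀ S T : Finset (Fin N), f (S ∩ T) + f (S ∪ T) ≤ f S + f T)
    (xstar : Fin N → ℝ)
    (hx_nonneg : ∀ n, 0 ≤ xstar n)
    (hx_mem : ∀ S : Finset (Fin N), ∑ n ∈ S, xstar n ≤ f S)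
    (g : Finset (Fin N) → ℝ)
    (hg : ∀ S : Finset (Fin N),
      IsLeast {r : ℝ | ∃ T : Finset (Fin N), S ⊆ T ∧ r = f T - ∑ n ∈ T, xstar n} (g S)) :
    g ∅ = 0 ∧
    (∀ S T : Finset (Fin N), S ⊆ T → g S ≤ g T) ∧
    (∀ S T : Finset (Fin N), g (S ∩ T) + g (S ∪ T) ≤ g S + g T) ∧
    (∀ x : Fin N → ℝ,
      ((∀ n, 0 ≤ x n) ∧
        ∀ S : Finset (Fin N), ∑ n ∈ S, x n ≤ f S - ∑ n ∈ S, xstar n) ↔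
      ((∀ n, 0 ≤ x n) ∧
        ∀ S : Finset (Fin N), ∑ n ∈ S, x n ≤ g S)) := by
  -- g S ≤ f S - ∑_S x*
  have hle : ∀ S : Finset (Fin N), g S ≤ f S - ∑ n ∈ S, xstar n := fun S =>
    (hg S).2 ⟨S, subset_rfl, rfl⟩
  refine ⟨?_, ?_, ?_, ?_⟩
  · obtain ⟨⟨T, _, hT⟩, hlb⟩ := hg ∅
    have h1 : g ∅ ≤ 0 := by simpa [hf_norm] using hle ∅
    have h2 : 0 ≤ g ∅ := by rw [hT]; linarith [hx_mem T]
    linarith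
  · intro S T hST
    obtain ⟨⟨U, hTU, hU⟩, _⟩ := hg T
    exact (hg S).2 ⟨U, hST.trans hTU, hU⟩
  · intro S T
    obtain ⟨⟨U, hSU, hU⟩, _⟩ := hg S
    obtain ⟨⟨V, hTV, hV⟩, _⟩ := hg T
    have h1 : g (S ∩ T) ≤ f (U ∩ V) - ∑ n ∈ U ∩ V, xstar n :=
      (hg (S ∩ T)).2 ⟨U ∩ V, inter_subset_inter hSU hTV, rfl⟩
    have h2 : g (S ∪ T) ≤ f (U ∪ V) - ∑ n ∈ U ∪ V, xstar n :=
      (hg (S ∪ T)).2 ⟨U ∪ V, union_subset_union hSU hTV, rfl⟩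
    have hsum : ∑ n ∈ U ∩ V, xstar n + ∑ n ∈ U ∪ V, xstar n
        = ∑ n ∈ U, xstar n + ∑ n ∈ V, xstar n :=
      by rw [add_comm, Finset.sum_union_inter]
    have := hf_sub U V
    rw [hU, hV]
    linarith
  · intro x
    refine ⟨fun ⟨h0, h⟩ => ⟨h0, fun S => ?_⟩, fun ⟨h0, h⟩ => ⟨h0, fun S => ?_⟩⟩
    · obtain ⟨⟨T, hST, hT⟩, _⟩ := hg S
      rw [hT]
      calc ∑ n ∈ S, x n ≤ ∑ n ∈ T, x n := Finset.sum_le_sum_of_subset_of_nonneg hST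
            (fun i _ _ => h0 i)
        _ ≤ f T - ∑ n ∈ T, xstar n := h T
    · linarith [hle S, h S]
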